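/- (Corollary 2.5, realization of contained primal cardinality vectors.) Let α be a type with decidable equality, d a natural number, and V : Fin d → Finset α pairwise disjoint Finsets. For a Finset X of α, define its primal cardinality vector pcv(X) as the multiset over i : Fin d of the cardinalities (X ∩ V i).card, with all zero entries removed. Then for every Finset X and every multiset m of positive natural numbers with m ⊑ pcv(X), there exists a Finset Y ⊆ X with pcv(Y) = m. -/

import Mathlib

/-- `Contains m' m` (the paper's `m' ≤_c m`): the elements of `m'` can be
matched bijectively with elements of a submultiset of `m` so that each element
of `m'` is at most its partner. -/
def Contains (m' m : Multiset ℕ) : Prop :=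
  ∃ t : Multiset ℕ, t ≤ m ∧ Multiset.Rel (· ≤ ·) m' t

/-- The primal cardinality vector of `X` with respect to the parts `V i`:
the multiset of the intersection cardinalities `(X ∩ V i).card` over `i : Fin d`,
with all zero entries removed. -/
def pcv {α : Type*} [DecidableEq α] {d : ℕ} (V : Fin d → Finset α)
    (X : Finset α) : Multiset ℕ :=
  ((Finset.univ : Finset (Fin d)).val.map (fun i => (X ∩ V i).card)).filter
    (fun x => 0 < x)

lemma le_map_exists {ι β : Type*} [DecidableEq ι] [DecidableEq β] (f : ι → β) :
    ∀ (t : Multiset β) (s : Multiset ι), t ≤ s.map f → ∃ s' ≤ s, s'.map f = t := by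
  intro t
  induction t using Multiset.induction with
  | empty => exact fun s _ => ⟨0, zero_le, rfl⟩
  | cons b t ih =>
    intro s h
    have hb : b ∈ s.map f := Multiset.mem_of_le h (Multiset.mem_cons_self _ _)
    obtain ⟨a, ha, rfl⟩ := Multiset.mem_map.1 hb
    have hs : s.map f = f a ::ₘ (s.erase a).map f := by
      rw [← Multiset.map_cons, Multiset.cons_erase ha]
    have ht : t ≤ (s.erase a).map f := by
      have := Multiset.erase_le_erase (f a) h
      rwa [Multiset.erase_cons_head, hs, Multiset.erase_cons_head] at this
    obtain ⟨s', hs', rfl⟩ := ih (s.erase a) ht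
    refine ⟨a ::ₘ s', ?_, by simp⟩
    calc a ::ₘ s' ≤ a ::ₘ s.erase a := Multiset.cons_le_cons _ hs'
      _ = s := Multiset.cons_erase ha

lemma rel_nodup_map {ι : Type*} [DecidableEq ι] (r : ℕ → ι → Prop) :
    ∀ (s : Multiset ι), s.Nodup → ∀ (m : Multiset ℕ), Multiset.Rel r m s →
      ∃ g : ι → ℕ, m = s.map g ∧ ∀ i ∈ s, r (g i) i := by
  intro s
  induction s using Multiset.induction with
  | empty => intro _ m h; rw [Multiset.rel_zero_right] at h; exact ⟨fun _ => 0, by simp [h], by simp⟩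
  | cons a s ih =>
    intro hnd m h
    rw [Multiset.rel_cons_right] at h
    obtain ⟨b, m', hb, hm', rfl⟩ := h
    obtain ⟨g, rfl, hg⟩ := ih (Multiset.nodup_cons.1 hnd).2 m' hm'
    have ha : a ∉ s := (Multiset.nodup_cons.1 hnd).1
    refine ⟨Function.update g a b, ?_, ?_⟩
    · rw [Multiset.map_cons, Function.update_self]
      congr 1
      refine (Multiset.map_congr rfl fun i hi => ?_).symm
      exact Function.update_of_ne (by rintro rfl; exact ha hi) _ _
    · intro i hi
      rcases Multiset.mem_cons.1 hi with rfl | hi'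
      · simpa using hb
      · rw [Function.update_of_ne (by rintro rfl; exact ha hi')]; exact hg i hi'

theorem stmt_12 {α : Type*} [DecidableEq α] {d : ℕ} (V : Fin d → Finset α)
    (hV : ∀ i j : Fin d, i ≠ j → Disjoint (V i) (V j)) :
    ∀ X : Finset α, ∀ m : Multiset ℕ, (∀ x ∈ m, 0 < x) →
      Contains m (pcv V X) → ∃ Y ⊆ X, pcv V Y = m := by
  intro X m hm ⟨t, htle, hrel⟩
  set f : Fin d → ℕ := fun i => (X ∩ V i).card with hf
  have hpcv : pcv V X = ((Finset.univ : Finset (Fin d)).val.filter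
      (fun i => 0 < f i)).map f := by
    rw [pcv, Multiset.filter_map]
    rfl
  rw [hpcv] at htle
  obtain ⟨s', hs'le, rfl⟩ := le_map_exists f t _ htle
  have hnd : s'.Nodup :=
    Multiset.nodup_of_le hs'le (Multiset.Nodup.filter _ Finset.univ.nodup)
  rw [Multiset.rel_map_right] at hrel
  obtain ⟨g, hmg, hg⟩ := rel_nodup_map _ s' hnd m hrel
  have hgf : ∀ i ∈ s', g i ≤ f i := hg
  set S : Finset (Fin d) := ⟨s', hnd⟩ with hS
  have hYex : ∀ i, ∃ Yi ⊆ X ∩ V i, Yi.card = min (g i) (f i) := fun i =>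
    Finset.exists_subset_card_eq (min_le_right _ _)
  choose Yi hYsub hYcard using hYex
  set Y : Finset α := S.biUnion Yi with hYdef
  have hYX : Y ⊆ X := by
    intro x hx
    obtain ⟨i, _, hxi⟩ := Finset.mem_biUnion.1 hx
    exact (Finset.inter_subset_left) (hYsub i hxi)
  refine ⟨Y, hYX, ?_⟩
  have hinter : ∀ j, Y ∩ V j = if j ∈ S then Yi j else ∅ := by
    intro j
    ext x
    simp only [Finset.mem_inter, Finset.mem_biUnion, hYdef]
    constructor
    · rintro ⟨⟨i, hiS, hxi⟩, hxj⟩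
      have hxVi : x ∈ V i := (Finset.inter_subset_right) (hYsub i hxi)
      have : i = j := by
        by_contra hne
        exact Finset.notMem_empty x (Finset.disjoint_iff_inter_eq_empty.1
          (hV i j hne) ▸ Finset.mem_inter.2 ⟨hxVi, hxj⟩)
      subst this
      simp [hiS, hxi]
    · intro hx
      by_cases hj : j ∈ S
      · simp only [hj, if_true] at hx
        exact ⟨⟨j, hj, hx⟩, (Finset.inter_subset_right) (hYsub j hx)⟩
      · simp [hj] at hx
  have hcard : ∀ j, (Y ∩ V j).card = if j ∈ S then g j else 0 := by
    intro j
    rw [hinter j]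
    by_cases hj : j ∈ S
    · simp only [hj, if_true, hYcard j]
      exact min_eq_left (hgf j hj)
    · simp [hj]
  set c : Fin d → ℕ := fun j => (Y ∩ V j).card with hc
  have hfilter : Finset.filter (fun j => 0 < c j) Finset.univ = S := by
    ext j
    simp only [Finset.mem_filter, Finset.mem_univ, true_and, hc, hcard j]
    by_cases hj : j ∈ S
    · simp only [hj, if_true, iff_true]
      exact hm (g j) (hmg ▸ Multiset.mem_map_of_mem g hj)
    · simp [hj]
  have : pcv V Y = (((Finset.univ : Finset (Fin d)).val.filter
      (fun j => 0 < c j)).map c) := by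
    rw [pcv, Multiset.filter_map]
    rfl
  rw [this]
  have hfv : ((Finset.univ : Finset (Fin d)).val.filter (fun j => 0 < c j)) = S.val := by
    rw [← Finset.filter_val, hfilter]
  rw [hfv, hmg]
  exact Multiset.map_congr rfl fun i hi => by
    simp only [hc, hcard i, if_pos (show i ∈ S from hi)]
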